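/- arXiv:2501.00472 — 7 statements merged into one kernel-verified Lean document; each statement's English description precedes it below -/
import Mathlib

section
/- Let L ≥ 1 be an integer and N an even integer with 2 ≤ N ≤ L+1. Then for every subset D of {0,1,...,L} with |D| = N, the spatial variance satisfies χ(D) ≤ χ(K_N^L), i.e., the clustered array K_N^L maximizes the spatial variance among all N-element subsets of {0,1,...,L}. -/
/-- Spatial mean of a finite set of integer sensor positions. -/
noncomputable def spatialMean (D : Finset ℤ) : ℝ :=
  (∑ d ∈ D, (d : ℝ)) / D.card

/-- Spatial variance of a finite set of integer sensor positions. -/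
noncomputable def spatialVar (D : Finset ℤ) : ℝ :=
  (∑ d ∈ D, ((d : ℝ) - spatialMean D) ^ 2) / D.card

/-- The `N`-sensor uniform linear array `U_N = {0, 1, ..., N-1}` as a set of integers. -/
noncomputable def ULA (N : ℕ) : Finset ℤ := Finset.Ico (0 : ℤ) (N : ℤ)

/-- The clustered array `K_N^L = U_{N/2} ∪ (L - U_{N/2})`. -/
noncomputable def clusteredArray (N L : ℕ) : Finset ℤ :=
  ULA (N / 2) ∪ (ULA (N / 2)).image (fun u => (L : ℤ) - u)

open Finset

/-- The sum of squared deviations about the mean is minimal among all centers. -/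
lemma sum_sq_mean_le_aux (D : Finset ℤ) (c : ℝ) :
    ∑ d ∈ D, ((d:ℝ) - spatialMean D) ^ 2 ≤ ∑ d ∈ D, ((d:ℝ) - c) ^ 2 := by
  rcases eq_or_ne D ∅ with rfl | hne
  · simp
  have hn : (D.card : ℝ) ≠ 0 := by
    exact_mod_cast card_ne_zero.mpr (nonempty_iff_ne_empty.mpr hne)
  set μ := spatialMean D with hμ
  have hsum : ∑ d ∈ D, ((d:ℝ) - μ) = 0 := by
    rw [Finset.sum_sub_distrib, Finset.sum_const, nsmul_eq_mul, hμ]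
    unfold spatialMean
    field_simp
    ring
  have key : ∑ d ∈ D, ((d:ℝ) - c) ^ 2
      = ∑ d ∈ D, ((d:ℝ) - μ) ^ 2 + (D.card : ℝ) * (μ - c) ^ 2 := by
    calc ∑ d ∈ D, ((d:ℝ) - c) ^ 2
        = ∑ d ∈ D, (((d:ℝ) - μ) ^ 2 + 2*(μ - c)*((d:ℝ) - μ) + (μ - c) ^ 2) :=
          Finset.sum_congr rfl (fun d _ => by ring)
      _ = ∑ d ∈ D, ((d:ℝ) - μ) ^ 2 + 2*(μ - c) * ∑ d ∈ D, ((d:ℝ) - μ)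
            + (D.card : ℝ) * (μ - c) ^ 2 := by
          rw [Finset.sum_add_distrib, Finset.sum_add_distrib, ← Finset.mul_sum,
            Finset.sum_const, nsmul_eq_mul]
      _ = _ := by rw [hsum]; ring
  nlinarith [sq_nonneg (μ - c), Nat.cast_nonneg (α := ℝ) D.card]

/-- The clustered array maximizes the spatial variance among all
`N`-element subsets of `{0, 1, ..., L}`. -/
theorem clustered_array_maximizes_spatial_variance
    (L N : ℕ) (hL : 1 ≤ L) (hNeven : Even N) (hN2 : 2 ≤ N) (hNL : N ≤ L + 1)
    (D : Finset ℤ) (hD : D ⊆ ULA (L + 1)) (hcard : D.card = N) :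
    spatialVar D ≤ spatialVar (clusteredArray N L) := by
  obtain ⟨n, hn⟩ := hNeven
  have hn2 : N / 2 = n := by omega
  have hnL : n + n ≤ L + 1 := by omega
  have hn1 : 1 ≤ n := by omega
  set K := clusteredArray N L with hK
  -- the two clusters are disjoint
  have hdisj : Disjoint (ULA n) ((ULA n).image (fun u => (L : ℤ) - u)) := by
    rw [Finset.disjoint_left]
    intro a ha hb
    simp only [ULA, Finset.mem_image, Finset.mem_Ico] at ha hb
    obtain ⟨u, ⟨hu0, hun⟩, hu⟩ := hb
    omega
  have hinj : Function.Injective (fun u : ℤ => (L : ℤ) - u) := by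
    intro a b hab; simpa using hab
  have hKeq : K = ULA n ∪ (ULA n).image (fun u => (L : ℤ) - u) := by
    rw [hK, clusteredArray, hn2]
  have hULAcard : (ULA n).card = n := by
    simp [ULA]
  have hKcard : K.card = N := by
    rw [hKeq, Finset.card_union_of_disjoint hdisj, Finset.card_image_of_injective _ hinj,
      hULAcard]; omega
  have hNpos : (0:ℝ) < (N : ℝ) := by exact_mod_cast Nat.lt_of_lt_of_le Nat.zero_lt_two hN2
  -- mean of K is L/2
  have hKsum : ∑ k ∈ K, (k:ℝ) = n * L := by
    rw [hKeq, Finset.sum_union hdisj, Finset.sum_image (fun a _ b _ h => hinj h)]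
    rw [← Finset.sum_add_distrib]
    push_cast
    rw [Finset.sum_congr rfl (fun u _ => by ring : ∀ u ∈ ULA n, ((u:ℝ) + ((L:ℝ) - u)) = (L:ℝ))]
    rw [Finset.sum_const, hULAcard, nsmul_eq_mul]
  have hKmean : spatialMean K = (L:ℝ)/2 := by
    rw [spatialMean, hKsum, hKcard]
    have h2n : (N:ℝ) = 2 * n := by exact_mod_cast (by omega : N = 2 * n)
    rw [h2n]
    have hnR : (0:ℝ) < (n:ℝ) := by exact_mod_cast hn1
    field_simp
  -- second-moment comparison
  set g : ℤ → ℝ := fun d => ((d:ℝ) - (L:ℝ)/2) ^ 2 with hg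
  set m : ℝ := (((L:ℝ) - N + 2)/2) ^ 2 with hm
  have hB : ∀ k ∈ K, m ≤ g k := by
    intro k hk
    rw [hKeq] at hk
    have hcast : (N:ℝ) = (n:ℝ) + (n:ℝ) := by exact_mod_cast hn
    have hNL' : (N:ℝ) ≤ (L:ℝ) + 1 := by exact_mod_cast hNL
    simp only [Finset.mem_union, Finset.mem_image, ULA, Finset.mem_Ico] at hk
    rcases hk with ⟨hk0, hkn⟩ | ⟨u, ⟨hu0, hun⟩, hu⟩
    · have h1 : (k:ℝ) ≤ (n:ℝ) - 1 := by exact_mod_cast (by omega : k ≤ (n:ℤ) - 1)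
      simp only [hg, hm]
      nlinarith [sq_nonneg ((k:ℝ) - (L:ℝ)/2 + ((L:ℝ) - N + 2)/2)]
    · subst hu
      have h1 : (u:ℝ) ≤ (n:ℝ) - 1 := by exact_mod_cast (by omega : u ≤ (n:ℤ) - 1)
      simp only [hg, hm]
      push_cast
      nlinarith [sq_nonneg ((L:ℝ) - (u:ℝ) - (L:ℝ)/2 - ((L:ℝ) - N + 2)/2)]
  have hA : ∀ d ∈ D \ K, g d ≤ m := by
    intro d hd
    rw [Finset.mem_sdiff, hKeq] at hd
    obtain ⟨hdD, hdK⟩ := hd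
    have hdU := hD hdD
    simp only [ULA, Finset.mem_Ico] at hdU
    simp only [Finset.mem_union, Finset.mem_image, ULA, Finset.mem_Ico, not_or, not_and,
      not_exists] at hdK
    obtain ⟨h1, h2⟩ := hdK
    have hdn : (n:ℤ) ≤ d := by
      by_contra h
      exact absurd (h1 hdU.1) (by omega)
    have hdLn : d ≤ (L:ℤ) - n := by
      by_contra h
      push_neg at h
      exact h2 ((L:ℤ) - d) ⟨by omega, by omega⟩ (by ring)
    have hc1 : ((n:ℤ):ℝ) ≤ (d:ℝ) := by exact_mod_cast hdn
    have hc2 : (d:ℝ) ≤ (L:ℝ) - n := by exact_mod_cast hdLn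
    have hcast : (N:ℝ) = (n:ℝ) + (n:ℝ) := by exact_mod_cast hn
    push_cast at hc1 hc2
    simp only [hg, hm]
    have h5 : (0:ℝ) ≤ ((L:ℝ) - N + 2)/2 - ((d:ℝ) - (L:ℝ)/2) := by linarith
    have h6 : (0:ℝ) ≤ ((L:ℝ) - N + 2)/2 + ((d:ℝ) - (L:ℝ)/2) := by linarith
    nlinarith [mul_nonneg h5 h6]
  -- ∑_{D} g ≤ ∑_{K} g
  have hsumle : ∑ d ∈ D, g d ≤ ∑ k ∈ K, g k := by
    have hcards : (D \ K).card = (K \ D).card := Finset.card_sdiff_comm (by rw [hcard, hKcard])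
    have h1 : ∑ d ∈ D \ K, g d ≤ (D \ K).card • m := Finset.sum_le_card_nsmul _ _ _ hA
    have h2 : (K \ D).card • m ≤ ∑ k ∈ K \ D, g k :=
      Finset.card_nsmul_le_sum _ _ _ (fun k hk => hB k (Finset.mem_sdiff.mp hk).1)
    have h3 : ∑ d ∈ D ∩ K, g d + ∑ d ∈ D \ K, g d = ∑ d ∈ D, g d :=
      Finset.sum_inter_add_sum_sdiff D K g
    have h4 : ∑ k ∈ K ∩ D, g k + ∑ k ∈ K \ D, g k = ∑ k ∈ K, g k :=
      Finset.sum_inter_add_sum_sdiff K D g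
    rw [Finset.inter_comm] at h4
    rw [hcards] at h1
    linarith [h1.trans h2]
  -- conclude
  have hvarK : spatialVar K = (∑ k ∈ K, g k) / (N:ℝ) := by
    rw [spatialVar, hKmean, hKcard]
  rw [hvarK, spatialVar, hcard]
  have hfinal : ∑ d ∈ D, ((d:ℝ) - spatialMean D) ^ 2 ≤ ∑ k ∈ K, g k :=
    (sum_sq_mean_le_aux D ((L:ℝ)/2)).trans hsumle
  gcongr
end

section
/- Let L ≥ 1 be an integer and N an even integer with 2 ≤ N ≤ L+1. If D is a subset of {0,1,...,L} with |D| = N and χ(D) = χ(K_N^L), then D = K_N^L; that is, the clustered array is the unique maximizer of the spatial variance among N-element subsets of {0,1,...,L}. -/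
lemma mem_clusteredArray {N L : ℕ} {d : ℤ} :
    d ∈ clusteredArray N L ↔
      (0 ≤ d ∧ d < (N / 2 : ℕ)) ∨ ((L : ℤ) - (N / 2 : ℕ) + 1 ≤ d ∧ d ≤ L) := by
  simp only [clusteredArray, ULA, Finset.mem_union, Finset.mem_Ico, Finset.mem_image]
  constructor
  · rintro (h1 | ⟨u, hu, rfl⟩)
    · left; exact h1
    · right; omega
  · rintro (h1 | h2)
    · left; exact h1
    · right; exact ⟨(L : ℤ) - d, by omega, by omega⟩

lemma card_clusteredArray (N L : ℕ) (hNeven : Even N) (hNL : N ≤ L + 1) :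
    (clusteredArray N L).card = N := by
  obtain ⟨r, rfl⟩ := hNeven
  have hr : (r + r) / 2 = r := by omega
  have hdisj : Disjoint (ULA ((r + r) / 2))
      ((ULA ((r + r) / 2)).image (fun u => (L : ℤ) - u)) := by
    rw [Finset.disjoint_left]
    intro x hx hx'
    simp only [ULA, Finset.mem_Ico, Finset.mem_image, hr] at hx hx'
    obtain ⟨u, hu, rfl⟩ := hx'
    omega
  rw [clusteredArray, Finset.card_union_of_disjoint hdisj,
    Finset.card_image_of_injective _ (fun a b hab => by omega)]
  simp only [ULA, hr]
  rw [Int.card_Ico]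
  simp

lemma sum_clusteredArray (N L : ℕ) :
    2 * (∑ d ∈ clusteredArray N L, d) = ((clusteredArray N L).card : ℤ) * L := by
  set K := clusteredArray N L with hK
  have hrefl : ∑ d ∈ K, ((L : ℤ) - d) = ∑ d ∈ K, d := by
    refine Finset.sum_nbij' (fun d => (L : ℤ) - d) (fun d => (L : ℤ) - d) ?_ ?_ ?_ ?_ ?_
    · intro d hd
      rw [hK, mem_clusteredArray] at hd ⊢
      omega
    · intro d hd
      rw [hK, mem_clusteredArray] at hd ⊢
      omega
    · intro d _; ring
    · intro d _; ring
    · intro d _; ring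
  have h2 : ∑ d ∈ K, ((L : ℤ) - d) = K.card • (L : ℤ) - ∑ d ∈ K, d := by
    rw [Finset.sum_sub_distrib, Finset.sum_const]
  rw [h2] at hrefl
  simp only [nsmul_eq_mul] at hrefl
  linarith

lemma sum_sq_mean_le (D : Finset ℤ) (hD : D.Nonempty) (c : ℝ) :
    ∑ d ∈ D, ((d : ℝ) - spatialMean D) ^ 2 ≤ ∑ d ∈ D, ((d : ℝ) - c) ^ 2 := by
  have hn : (0 : ℝ) < D.card := by exact_mod_cast Finset.card_pos.2 hD
  set μ := spatialMean D with hμ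
  have hsum : ∑ d ∈ D, ((d : ℝ) - μ) = 0 := by
    rw [Finset.sum_sub_distrib, Finset.sum_const, nsmul_eq_mul, hμ, spatialMean]
    field_simp
    ring
  have key : ∑ d ∈ D, ((d : ℝ) - c) ^ 2 - ∑ d ∈ D, ((d : ℝ) - μ) ^ 2
      = (D.card : ℝ) * (μ - c) ^ 2 := by
    rw [← Finset.sum_sub_distrib]
    have h1 : ∀ d ∈ D, ((d : ℝ) - c) ^ 2 - ((d : ℝ) - μ) ^ 2
        = 2 * (μ - c) * ((d : ℝ) - μ) + (μ - c) ^ 2 := fun d _ => by ring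
    rw [Finset.sum_congr rfl h1, Finset.sum_add_distrib, ← Finset.mul_sum, hsum,
      Finset.sum_const, nsmul_eq_mul]
    ring
  nlinarith [sq_nonneg (μ - c)]

/-- The clustered array is the unique maximizer of the spatial variance
among `N`-element subsets of `{0, 1, ..., L}`. -/
theorem clustered_array_unique_maximizer
    (L N : ℕ) (hL : 1 ≤ L) (hNeven : Even N) (hN2 : 2 ≤ N) (hNL : N ≤ L + 1)
    (D : Finset ℤ) (hD : D ⊆ ULA (L + 1)) (hcard : D.card = N)
    (hvar : spatialVar D = spatialVar (clusteredArray N L)) :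
    D = clusteredArray N L := by
  classical
  by_contra hne
  set K := clusteredArray N L with hK
  have hKcard : K.card = N := card_clusteredArray N L hNeven hNL
  set w : ℤ → ℤ := fun d => (2 * d - L) ^ 2 with hw
  set h : ℕ := N / 2 with hh
  have hh2 : 2 * h = N := by
    obtain ⟨r, hr⟩ := hNeven; omega
  -- Integer side: strict inequality ∑_D w < ∑_K w
  have hAne : (D \ K).Nonempty := by
    rw [Finset.sdiff_nonempty]
    intro hsub
    exact hne (Finset.eq_of_subset_of_card_le hsub (by rw [hKcard, hcard]))
  have hcards : (D \ K).card = (K \ D).card :=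
    Finset.card_sdiff_comm (hcard.trans hKcard.symm)
  set a : ℤ := (L : ℤ) - 2 * h with ha_def
  obtain ⟨d0, hd0⟩ := hAne.exists_mem
  have hd0mem : (h : ℤ) ≤ d0 ∧ d0 ≤ (L : ℤ) - h := by
    have h1 := hD (Finset.mem_sdiff.1 hd0).1
    have h2 := (Finset.mem_sdiff.1 hd0).2
    rw [hK, mem_clusteredArray] at h2
    simp only [ULA, Finset.mem_Ico] at h1
    push_cast at h1 h2 ⊢
    omega
  have ha : 0 ≤ a := by omega
  have hAle : ∀ d ∈ D \ K, w d ≤ a ^ 2 := by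
    intro d hd
    have h1 := hD (Finset.mem_sdiff.1 hd).1
    have h2 := (Finset.mem_sdiff.1 hd).2
    rw [hK, mem_clusteredArray] at h2
    simp only [ULA, Finset.mem_Ico] at h1
    have hb : (h : ℤ) ≤ d ∧ d ≤ (L : ℤ) - h := by push_cast at h1 h2 ⊢; omega
    have hlo : -a ≤ 2 * d - L := by omega
    have hhi : 2 * d - L ≤ a := by omega
    simp only [hw]
    nlinarith
  have hBge : ∀ k ∈ K \ D, (a + 2) ^ 2 ≤ w k := by
    intro k hk
    have h2 := (Finset.mem_sdiff.1 hk).1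
    rw [hK, mem_clusteredArray] at h2
    simp only [hw]
    rcases h2 with h2 | h2
    · have : 2 * k - L ≤ -(a + 2) := by omega
      nlinarith
    · have : a + 2 ≤ 2 * k - L := by omega
      nlinarith
  have h1 : ∑ d ∈ D \ K, w d ≤ (D \ K).card • a ^ 2 :=
    Finset.sum_le_card_nsmul _ _ _ hAle
  have h2 : (K \ D).card • (a + 2) ^ 2 ≤ ∑ k ∈ K \ D, w k :=
    Finset.card_nsmul_le_sum _ _ _ hBge
  have hcardpos : 0 < (D \ K).card := Finset.card_pos.2 ⟨d0, hd0⟩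
  have hstrict : ∑ d ∈ D \ K, w d < ∑ k ∈ K \ D, w k := by
    have haa : a ^ 2 < (a + 2) ^ 2 := by nlinarith
    have h3 : (D \ K).card • a ^ 2 < (D \ K).card • (a + 2) ^ 2 := by
      simp only [nsmul_eq_mul]
      have : (0 : ℤ) < (D \ K).card := by exact_mod_cast hcardpos
      nlinarith
    calc ∑ d ∈ D \ K, w d ≤ (D \ K).card • a ^ 2 := h1
      _ < (D \ K).card • (a + 2) ^ 2 := h3
      _ = (K \ D).card • (a + 2) ^ 2 := by rw [hcards]
      _ ≤ ∑ k ∈ K \ D, w k := h2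
  have hsumD : ∑ d ∈ D ∩ K, w d + ∑ d ∈ D \ K, w d = ∑ d ∈ D, w d :=
    Finset.sum_inter_add_sum_sdiff D K w
  have hsumK : ∑ d ∈ K ∩ D, w d + ∑ d ∈ K \ D, w d = ∑ d ∈ K, w d :=
    Finset.sum_inter_add_sum_sdiff K D w
  have hinter : D ∩ K = K ∩ D := Finset.inter_comm D K
  have hZ : ∑ d ∈ D, w d < ∑ d ∈ K, w d := by
    rw [← hsumD, ← hsumK, hinter]
    linarith
  -- Real side: ∑_K w ≤ ∑_D w
  have hN0 : (0 : ℝ) < N := by exact_mod_cast (by omega : 0 < N)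
  have hDne : D.Nonempty := Finset.card_pos.1 (by omega)
  have hmeanK : spatialMean K = (L : ℝ) / 2 := by
    have hs := sum_clusteredArray N L
    rw [← hK, hKcard] at hs
    rw [spatialMean, hKcard]
    have hcast : (∑ d ∈ K, (d : ℝ)) = ((∑ d ∈ K, d : ℤ) : ℝ) := by push_cast; ring
    rw [hcast]
    have hs' : (2 : ℝ) * ((∑ d ∈ K, d : ℤ) : ℝ) = (N : ℝ) * L := by exact_mod_cast hs
    field_simp
    linarith
  have hvarD : spatialVar D = (∑ d ∈ D, ((d : ℝ) - spatialMean D) ^ 2) / N := by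
    rw [spatialVar, hcard]
  have hvarK : spatialVar K = (∑ d ∈ K, ((d : ℝ) - (L : ℝ) / 2) ^ 2) / N := by
    rw [spatialVar, hKcard, hmeanK]
  have hEq : ∑ d ∈ D, ((d : ℝ) - spatialMean D) ^ 2
      = ∑ d ∈ K, ((d : ℝ) - (L : ℝ) / 2) ^ 2 := by
    have hNne : (N : ℝ) ≠ 0 := ne_of_gt hN0
    have := hvar
    rw [hvarD, hvarK, div_eq_div_iff hNne hNne] at this
    exact mul_right_cancel₀ hNne this
  have hA := sum_sq_mean_le D hDne ((L : ℝ) / 2)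
  have hle : ∑ d ∈ K, ((d : ℝ) - (L : ℝ) / 2) ^ 2 ≤ ∑ d ∈ D, ((d : ℝ) - (L : ℝ) / 2) ^ 2 := by
    rw [← hEq]; exact hA
  have hwcast : ∀ (S : Finset ℤ), ∑ d ∈ S, ((d : ℝ) - (L : ℝ) / 2) ^ 2
      = ((∑ d ∈ S, w d : ℤ) : ℝ) / 4 := by
    intro S
    have hpt : ∀ d ∈ S, ((d : ℝ) - (L : ℝ) / 2) ^ 2 = ((w d : ℤ) : ℝ) / 4 := by
      intro d _
      simp only [hw]
      push_cast
      ring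
    rw [Finset.sum_congr rfl hpt, ← Finset.sum_div]
    push_cast
    ring
  rw [hwcast D, hwcast K] at hle
  have hR : ((∑ d ∈ K, w d : ℤ) : ℝ) ≤ ((∑ d ∈ D, w d : ℤ) : ℝ) := by linarith
  have : (∑ d ∈ K, w d) ≤ ∑ d ∈ D, w d := by exact_mod_cast hR
  omega
end

section
/- Let L ≥ 1 be an integer and N an even integer with 2 ≤ N ≤ L+1. Then the spatial variance of the clustered array satisfies χ(K_N^L) = (1/4)·((L + 1 − N/2)² + (1/3)·(N²/4 − 1)). -/
lemma sum_Ico_int (n : ℕ) (f : ℤ → ℝ) :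
    ∑ d ∈ Finset.Ico (0:ℤ) (n:ℤ), f d = ∑ i ∈ Finset.range n, f i := by
  induction n with
  | zero => simp
  | succ k ih =>
    rw [Finset.range_add_one, Finset.sum_insert (by simp)]
    have h1 : ((k+1 : ℕ) : ℤ) = (k : ℤ) + 1 := by push_cast; ring
    have h2 : Finset.Ico (0:ℤ) ((k:ℤ)+1) = insert (k:ℤ) (Finset.Ico (0:ℤ) (k:ℤ)) := by
      ext x
      simp only [Finset.mem_Ico, Finset.mem_insert]
      omega
    rw [h1, h2, Finset.sum_insert (by simp), ih]

lemma sum_id_real (n : ℕ) : ∑ i ∈ Finset.range n, (i:ℝ) = n*(n-1)/2 := by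
  induction n with
  | zero => simp
  | succ k ih => rw [Finset.sum_range_succ, ih]; push_cast; ring

lemma sum_sq_real (n : ℕ) : ∑ i ∈ Finset.range n, (i:ℝ)^2 = n*(n-1)*(2*n-1)/6 := by
  induction n with
  | zero => simp
  | succ k ih => rw [Finset.sum_range_succ, ih]; push_cast; ring

/-- The spatial variance of the clustered array equals
`(1/4)·((L + 1 − N/2)² + (1/3)·(N²/4 − 1))`. -/
theorem spatialVar_clusteredArray
    (L N : ℕ) (hL : 1 ≤ L) (hNeven : Even N) (hN2 : 2 ≤ N) (hNL : N ≤ L + 1) :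
    spatialVar (clusteredArray N L)
      = (1 / 4) * (((L : ℝ) + 1 - (N : ℝ) / 2) ^ 2 + (1 / 3) * ((N : ℝ) ^ 2 / 4 - 1)) := by
  obtain ⟨M, hM⟩ := hNeven
  have hM' : N = 2 * M := by omega
  have hM1 : 1 ≤ M := by omega
  have hML : 2 * M ≤ L + 1 := by omega
  have hMdiv : N / 2 = M := by omega
  have hinj : ∀ x ∈ ULA M, ∀ y ∈ ULA M,
      (fun u : ℤ => (L:ℤ) - u) x = (fun u : ℤ => (L:ℤ) - u) y → x = y := by
    intro a _ b _ h
    dsimp only at h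
    omega
  have hdisj : Disjoint (ULA M) ((ULA M).image (fun u => (L : ℤ) - u)) := by
    rw [Finset.disjoint_left]
    intro d hd hd'
    simp only [ULA, Finset.mem_Ico, Finset.mem_image] at hd hd'
    obtain ⟨u, ⟨hu0, hu1⟩, rfl⟩ := hd'
    omega
  have hcardU : (ULA M).card = M := by simp [ULA]
  have hcard : (clusteredArray N L).card = 2 * M := by
    rw [clusteredArray, hMdiv, Finset.card_union_of_disjoint hdisj,
      Finset.card_image_of_injOn (fun a ha b hb h => hinj a ha b hb h), hcardU]
    ring
  have hsum : ∀ f : ℤ → ℝ, ∑ d ∈ clusteredArray N L, f d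
      = ∑ i ∈ Finset.range M, f i + ∑ i ∈ Finset.range M, f ((L:ℤ) - i) := by
    intro f
    rw [clusteredArray, hMdiv, Finset.sum_union hdisj, Finset.sum_image hinj]
    rw [ULA, sum_Ico_int, sum_Ico_int M (fun d => f ((L:ℤ) - d))]
  have hMr : (M:ℝ) ≠ 0 := by positivity
  have h1 : ∑ i ∈ Finset.range M, ((i:ℤ):ℝ) = M*(M-1)/2 := by
    push_cast; exact sum_id_real M
  have h2 : ∑ i ∈ Finset.range M, ((((L:ℤ) - (i:ℕ)) : ℤ):ℝ) = M*L - M*(M-1)/2 := by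
    push_cast
    rw [Finset.sum_sub_distrib, Finset.sum_const, sum_id_real, nsmul_eq_mul, Finset.card_range]
  have hmean : spatialMean (clusteredArray N L) = (L:ℝ)/2 := by
    rw [spatialMean, hcard, hsum (fun d => (d:ℝ)), h1, h2]
    push_cast
    field_simp
    ring
  have hexp : ∑ i ∈ Finset.range M, ((i:ℝ) - (L:ℝ)/2)^2
      = M*(M-1)*(2*M-1)/6 - (L:ℝ)*(M*(M-1)/2) + M*((L:ℝ)/2)^2 := by
    have h : ∀ i ∈ Finset.range M, ((i:ℝ) - (L:ℝ)/2)^2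
        = (i:ℝ)^2 - (L:ℝ)*(i:ℝ) + ((L:ℝ)/2)^2 := fun i _ => by ring
    rw [Finset.sum_congr rfl h, Finset.sum_add_distrib, Finset.sum_sub_distrib,
      sum_sq_real, ← Finset.mul_sum, sum_id_real, Finset.sum_const, nsmul_eq_mul, Finset.card_range]
  rw [spatialVar, hmean, hcard, hsum (fun d => ((d:ℝ) - (L:ℝ)/2)^2)]
  have hsym : ∀ i ∈ Finset.range M,
      (((((L:ℤ) - (i:ℕ)):ℤ):ℝ) - (L:ℝ)/2)^2 = ((i:ℝ) - (L:ℝ)/2)^2 := by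
    intro i _; push_cast; ring
  have h1' : ∑ i ∈ Finset.range M, (((i:ℤ):ℝ) - (L:ℝ)/2)^2
      = ∑ i ∈ Finset.range M, ((i:ℝ) - (L:ℝ)/2)^2 := by push_cast; rfl
  rw [h1', Finset.sum_congr rfl hsym, hexp]
  have hNr : (N:ℝ) = 2 * (M:ℝ) := by rw [hM']; push_cast; ring
  rw [hNr]
  push_cast
  field_simp
  ring
end

section
/- Let L ≥ 1 be an integer and N an even integer with 2 ≤ N ≤ L+1. Then for every finite set D ⊂ ℤ with |D| = N whose physical aperture satisfies max D − min D ≤ L, one has χ(D) ≤ χ(K_N^L); that is, under a constraint on the physical aperture and the number of sensors, no array geometry has larger spatial variance than the clustered array. -/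
/-- Strictly monotone integer sequences grow at least linearly. -/
lemma strictMono_gap {n : ℕ} {f : Fin n → ℤ} (hf : StrictMono f) :
    ∀ (k : ℕ) (i j : Fin n), (j : ℕ) = (i : ℕ) + k → f i + k ≤ f j := by
  intro k
  induction k with
  | zero =>
    intro i j h
    have : i = j := Fin.ext (by omega)
    simp [this]
  | succ k ih =>
    intro i j h
    have hj' : (i : ℕ) + k < n := by omega
    have h1 := ih i ⟨(i : ℕ) + k, hj'⟩ rfl
    have h2 : f ⟨(i : ℕ) + k, hj'⟩ < f j := hf (by simp [Fin.lt_iff_val_lt_val]; omega)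
    push_cast
    omega

/-- The variance is at most the second moment about any point. -/
lemma var_le_moment (D : Finset ℤ) (hne : D.Nonempty) (c : ℝ) :
    spatialVar D ≤ (∑ d ∈ D, ((d : ℝ) - c) ^ 2) / D.card := by
  have hn : (0 : ℝ) < D.card := by
    have := Finset.card_pos.mpr hne
    exact_mod_cast this
  set μ := spatialMean D with hμ
  have hsum : ∑ d ∈ D, (d : ℝ) = D.card * μ := by
    rw [hμ, spatialMean]
    field_simp
  have expand : ∑ d ∈ D, ((d : ℝ) - c) ^ 2
      = ∑ d ∈ D, ((d : ℝ) - μ) ^ 2 + (2 * (μ - c)) * (∑ d ∈ D, (d : ℝ))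
        + (D.card : ℝ) * ((μ - c) ^ 2 - 2 * (μ - c) * μ) := by
    calc ∑ d ∈ D, ((d : ℝ) - c) ^ 2
        = ∑ d ∈ D, (((d : ℝ) - μ) ^ 2 + (2 * (μ - c)) * (d : ℝ)
            + ((μ - c) ^ 2 - 2 * (μ - c) * μ)) :=
          Finset.sum_congr rfl (fun d _ => by ring)
      _ = _ := by
          rw [Finset.sum_add_distrib, Finset.sum_add_distrib, ← Finset.mul_sum,
            Finset.sum_const, nsmul_eq_mul]
  rw [spatialVar]
  rw [div_le_div_iff_of_pos_right hn]
  have key : ∑ d ∈ D, ((d : ℝ) - c) ^ 2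
      = ∑ d ∈ D, ((d : ℝ) - μ) ^ 2 + (D.card : ℝ) * (μ - c) ^ 2 := by
    rw [expand, hsum]; ring
  have := mul_nonneg hn.le (sq_nonneg (μ - c))
  linarith

/-- The spatial variance of the clustered array, in closed form. -/
lemma clusteredVar (L m : ℕ) (hm : 1 ≤ m) (hLm : 2 * m ≤ L + 1) :
    spatialVar (clusteredArray (2 * m) L)
      = (2 * ∑ u ∈ Finset.range m, ((L : ℝ) / 2 - u) ^ 2) / (2 * m) := by
  have hdiv : 2 * m / 2 = m := by omega
  have hULA : ULA m = (Finset.range m).image (fun u : ℕ => (u : ℤ)) := by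
    ext x
    simp only [ULA, Finset.mem_Ico, Finset.mem_image, Finset.mem_range]
    constructor
    · rintro ⟨h1, h2⟩
      exact ⟨x.toNat, by omega, by omega⟩
    · rintro ⟨u, hu, rfl⟩
      omega
  have hdisj : Disjoint (ULA m) ((ULA m).image (fun u => (L : ℤ) - u)) := by
    rw [Finset.disjoint_left]
    intro x hx hx'
    simp only [ULA, Finset.mem_Ico, Finset.mem_image] at hx hx'
    obtain ⟨u, hu, rfl⟩ := hx'
    omega
  have hsum : ∀ f : ℤ → ℝ, ∑ d ∈ clusteredArray (2 * m) L, f d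
      = ∑ u ∈ Finset.range m, f u + ∑ u ∈ Finset.range m, f ((L : ℤ) - u) := by
    intro f
    rw [clusteredArray, hdiv, Finset.sum_union hdisj, hULA, Finset.sum_image
      (by intro x _ y _ h; simpa using h), Finset.sum_image
      (by intro x _ y _ h; simpa using h), Finset.sum_image
      (by intro x _ y _ h; simpa using h)]
  have hcard : (clusteredArray (2 * m) L).card = 2 * m := by
    rw [clusteredArray, hdiv, Finset.card_union_of_disjoint hdisj,
      Finset.card_image_of_injective _ (fun x y h => by omega)]
    have : (ULA m).card = m := by simp [ULA]
    omega
  have hmean : spatialMean (clusteredArray (2 * m) L) = (L : ℝ) / 2 := by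
    rw [spatialMean, hcard, hsum]
    rw [← Finset.sum_add_distrib]
    have : ∑ u ∈ Finset.range m, (((u : ℤ) : ℝ) + (((L : ℤ) - u : ℤ) : ℝ))
        = ∑ u ∈ Finset.range m, (L : ℝ) := by
      refine Finset.sum_congr rfl fun u _ => ?_
      push_cast; ring
    rw [this, Finset.sum_const, Finset.card_range, nsmul_eq_mul]
    have hm' : (m : ℝ) ≠ 0 := by positivity
    field_simp
    push_cast; ring
  rw [spatialVar, hcard, hmean, hsum]
  have h1 : ∑ u ∈ Finset.range m, (((u : ℤ) : ℝ) - (L : ℝ) / 2) ^ 2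
      = ∑ u ∈ Finset.range m, ((L : ℝ) / 2 - u) ^ 2 :=
    Finset.sum_congr rfl fun u _ => by push_cast; ring
  have h2 : ∑ u ∈ Finset.range m, ((((L : ℤ) - u : ℤ) : ℝ) - (L : ℝ) / 2) ^ 2
      = ∑ u ∈ Finset.range m, ((L : ℝ) / 2 - u) ^ 2 :=
    Finset.sum_congr rfl fun u _ => by push_cast; ring
  rw [h1, h2]
  push_cast
  ring

/-- Under an aperture constraint `max D − min D ≤ L` and sensor-number
constraint `|D| = N`, no array has larger spatial variance than the clustered array. -/
theorem clustered_array_optimal_under_aperture_constraint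
    (L N : ℕ) (hL : 1 ≤ L) (hNeven : Even N) (hN2 : 2 ≤ N) (hNL : N ≤ L + 1)
    (D : Finset ℤ) (hcard : D.card = N) (hne : D.Nonempty)
    (haperture : D.max' hne - D.min' hne ≤ (L : ℤ)) :
    spatialVar D ≤ spatialVar (clusteredArray N L) := by
  obtain ⟨r, hr⟩ := hNeven
  set m : ℕ := N / 2 with hmdef
  have hm : N = 2 * m := by omega
  have hm1 : 1 ≤ m := by omega
  have hNpos : 0 < N := by omega
  set e := D.orderIsoOfFin hcard with he
  set f : Fin N → ℤ := fun i => (e i : ℤ) with hf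
  have hfmono : StrictMono f := fun i j h => by
    have := e.strictMono h
    exact_mod_cast this
  set i0 : Fin N := ⟨0, hNpos⟩ with hi0
  set ilast : Fin N := ⟨N - 1, by omega⟩ with hilast
  set a := f i0 with ha
  set b := f ilast with hb
  have hmem : ∀ i, f i ∈ D := fun i => (e i).2
  have hminle : D.min' hne ≤ a := D.min'_le _ (hmem i0)
  have hlemax : b ≤ D.max' hne := D.le_max' _ (hmem ilast)
  have hba : b - a ≤ (L : ℤ) := by omega
  set c : ℝ := ((a : ℝ) + b) / 2 with hc
  have hlow : ∀ i : Fin N, a + ((i : ℕ) : ℤ) ≤ f i := fun i =>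
    strictMono_gap hfmono (i : ℕ) i0 i (by simp [hi0])
  have hhigh : ∀ i : Fin N, f i + ((N - 1 - (i : ℕ) : ℕ) : ℤ) ≤ b := fun i =>
    strictMono_gap hfmono (N - 1 - (i : ℕ)) i ilast (by simp [hilast]; omega)
  calc spatialVar D ≤ (∑ d ∈ D, ((d : ℝ) - c) ^ 2) / D.card := var_le_moment D hne c
    _ = (∑ i : Fin N, ((f i : ℝ) - c) ^ 2) / N := by
        rw [hcard]
        congr 1
        rw [← Finset.sum_coe_sort D (fun d => ((d : ℝ) - c) ^ 2)]
        exact (Fintype.sum_equiv e.toEquiv (fun i : Fin N => ((f i : ℝ) - c) ^ 2)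
          (fun x : D => (((x : ℤ) : ℝ) - c) ^ 2) (fun i => rfl)).symm
    _ ≤ (∑ i : Fin N, ((L : ℝ) / 2 - (min (i : ℕ) (N - 1 - (i : ℕ)) : ℕ)) ^ 2) / N := by
        have hNR : (0 : ℝ) < N := by exact_mod_cast hNpos
        rw [div_le_div_iff_of_pos_right hNR]
        refine Finset.sum_le_sum fun i _ => ?_
        set k : ℕ := min (i : ℕ) (N - 1 - (i : ℕ)) with hk
        have h1 : (a : ℝ) + ((i : ℕ) : ℝ) ≤ (f i : ℝ) := by exact_mod_cast hlow i
        have h2 : (f i : ℝ) + ((N - 1 - (i : ℕ) : ℕ) : ℝ) ≤ (b : ℝ) := by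
          exact_mod_cast hhigh i
        have hk1 : ((k : ℕ) : ℝ) ≤ ((i : ℕ) : ℝ) := by
          exact_mod_cast Nat.cast_le.mpr (min_le_left _ _)
        have hk2 : ((k : ℕ) : ℝ) ≤ ((N - 1 - (i : ℕ) : ℕ) : ℝ) := by
          exact_mod_cast Nat.cast_le.mpr (min_le_right _ _)
        have hbaR : (b : ℝ) - (a : ℝ) ≤ (L : ℝ) := by exact_mod_cast hba
        apply sq_le_sq'
        · rw [hc]; linarith
        · rw [hc]; linarith
    _ = (2 * ∑ u ∈ Finset.range m, ((L : ℝ) / 2 - u) ^ 2) / (2 * m) := by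
        rw [hm]
        have hden : ((2 * m : ℕ) : ℝ) = 2 * (m : ℝ) := by push_cast; ring
        rw [hden]
        congr 1
        rw [Fin.sum_univ_eq_sum_range
          (fun i => ((L : ℝ) / 2 - (min i (2 * m - 1 - i) : ℕ)) ^ 2) (2 * m)]
        rw [Finset.range_eq_Ico, ← Finset.sum_Ico_consecutive _ (Nat.zero_le m)
          (by omega : m ≤ 2 * m)]
        have hfst : ∑ i ∈ Finset.Ico 0 m,
            ((L : ℝ) / 2 - (min i (2 * m - 1 - i) : ℕ)) ^ 2
            = ∑ u ∈ Finset.range m, ((L : ℝ) / 2 - u) ^ 2 := by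
          rw [← Finset.range_eq_Ico]
          refine Finset.sum_congr rfl fun i hi => ?_
          rw [Finset.mem_range] at hi
          have : min i (2 * m - 1 - i) = i := by omega
          rw [this]
        have hsnd : ∑ i ∈ Finset.Ico m (2 * m),
            ((L : ℝ) / 2 - (min i (2 * m - 1 - i) : ℕ)) ^ 2
            = ∑ u ∈ Finset.range m, ((L : ℝ) / 2 - u) ^ 2 := by
          rw [Finset.sum_Ico_eq_sum_range]
          have : 2 * m - m = m := by omega
          rw [this]
          rw [← Finset.sum_range_reflect (fun u => ((L : ℝ) / 2 - u) ^ 2) m]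
          refine Finset.sum_congr rfl fun j hj => ?_
          rw [Finset.mem_range] at hj
          have : min (m + j) (2 * m - 1 - (m + j)) = m - 1 - j := by omega
          rw [this]
        rw [hfst, hsnd]
        exact (two_mul (∑ u ∈ Finset.range m, ((L : ℝ) / 2 - u) ^ 2)).symm
    _ = spatialVar (clusteredArray N L) := by
        rw [hm, clusteredVar L m hm1 (by omega)]
end

section
/- Let N_t ≥ 1 be an integer, N_r ≥ 2 an even integer, and set L = (N_t + 1)·N_r/2 − 1. Let D_t = (N_r/2)·U_{N_t} be the transmit array and D_r = K_{N_r}^L the clustered receive array. Then the sum co-array D_Σ = D_t + D_r is contiguous: D_Σ = U_{N_t·N_r} = {0, 1, ..., N_t·N_r − 1}. -/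
open scoped Pointwise

/-- With `L = (N_t + 1)·N_r/2 − 1`, the sum co-array of the
dilated-ULA transmit array and the clustered receive array is contiguous:
`D_t + D_r = U_{N_t·N_r}`. -/
theorem sum_coarray_contiguous
    (Nt Nr : ℕ) (hNt : 1 ≤ Nt) (hNr : 2 ≤ Nr) (hNrEven : Even Nr)
    (L : ℕ) (hL : L = (Nt + 1) * Nr / 2 - 1) :
    (ULA Nt).image (fun m => ((Nr : ℤ) / 2) * m) + clusteredArray Nr L
      = ULA (Nt * Nr) := by
  obtain ⟨M, hM⟩ := hNrEven
  subst hM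
  have hM1 : 1 ≤ M := by omega
  have hhalf : (M + M) / 2 = M := by omega
  have hLdef : L = (Nt + 1) * M - 1 := by
    have h2 : (Nt + 1) * (M + M) = 2 * ((Nt + 1) * M) := by ring
    rw [hL, h2, Nat.mul_div_cancel_left _ (by norm_num : 0 < 2)]
  have hLZ : (L : ℤ) = (Nt + 1) * M - 1 := by
    have h1 : 1 ≤ (Nt + 1) * M := Nat.one_le_iff_ne_zero.mpr (by positivity)
    rw [hLdef]; push_cast [h1]; ring
  have hdivZ : (((M : ℕ) + M : ℕ) : ℤ) / 2 = (M : ℤ) := by push_cast; omega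
  ext d
  simp only [ULA, clusteredArray, hhalf, Finset.mem_add, Finset.mem_union,
    Finset.mem_image, Finset.mem_Ico, hdivZ]
  push_cast
  constructor
  · rintro ⟨m, ⟨⟨hm0, hm1⟩, -⟩, b, hb, rfl⟩
    rcases hb with ⟨hu0, hu1⟩ | ⟨u, ⟨hu0, hu1⟩, rfl⟩
    · constructor
      · positivity
      · have h1 : (M : ℤ) * (m + 1) ≤ (M : ℤ) * Nt :=
          mul_le_mul_of_nonneg_left (by omega) (by positivity)
        nlinarith
    · rw [hLZ]
      constructor
      · nlinarith
      · have h1 : (M : ℤ) * (m + 1) ≤ (M : ℤ) * Nt :=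
          mul_le_mul_of_nonneg_left (by omega) (by positivity)
        nlinarith
  · rintro ⟨hd0, hd1⟩
    set q := d / (M : ℤ) with hq
    set r := d % (M : ℤ) with hr
    have hMpos : (0 : ℤ) < M := by exact_mod_cast hM1
    have hdqr : d = M * q + r := by rw [hq, hr]; exact (Int.mul_ediv_add_emod d M).symm
    have hr0 : 0 ≤ r := Int.emod_nonneg d (by omega)
    have hr1 : r < M := Int.emod_lt_of_pos d hMpos
    have hq0 : 0 ≤ q := Int.ediv_nonneg hd0 (by omega)
    have hq2 : q < 2 * Nt := by
      by_contra h
      push_neg at h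
      have : (M : ℤ) * (2 * Nt) ≤ M * q := mul_le_mul_of_nonneg_left h (by positivity)
      nlinarith
    by_cases hqN : q < Nt
    · refine ⟨q, ⟨⟨hq0, hqN⟩, rfl⟩, r, Or.inl ⟨hr0, hr1⟩, by omega⟩
    · push_neg at hqN
      refine ⟨q - Nt, ⟨⟨by omega, by omega⟩, rfl⟩,
        (L : ℤ) - (M - 1 - r), Or.inr ⟨M - 1 - r, ⟨by omega, by omega⟩, rfl⟩, ?_⟩
      rw [hLZ]; ring_nf; nlinarith [hdqr]
end

section
/- Let N_t ≥ 1 be an integer, N_r ≥ 2 an even integer, and set L = (N_t + 1)·N_r/2 − 1. Let D_t = (N_r/2)·U_{N_t} and D_r = K_{N_r}^L. Then the sum co-array is nonredundant: |D_t + D_r| = N_t·N_r = |D_t|·|D_r|; equivalently, the map (d_t, d_r) ↦ d_t + d_r is injective on D_t × D_r. -/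
open scoped Pointwise

lemma mem_ULA {N : ℕ} {x : ℤ} : x ∈ ULA N ↔ 0 ≤ x ∧ x < N := by
  simp [ULA]

lemma ULA_reflect (h : ℕ) : (ULA h).image (fun u => ((h : ℤ) - 1) - u) = ULA h := by
  ext x
  simp only [Finset.mem_image, mem_ULA]
  constructor
  · rintro ⟨u, ⟨hu0, huh⟩, rfl⟩; constructor <;> linarith
  · rintro ⟨hx0, hxh⟩
    exact ⟨(h : ℤ) - 1 - x, ⟨by linarith, by linarith⟩, by ring⟩

lemma dilated_add_block (n h : ℕ) (hh : 0 < h) (c : ℤ) :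
    ((ULA n).image (fun m => (h : ℤ) * m)) + (ULA h).image (fun u => c - u)
      = Finset.Ico (c + 1 - h) (c + 1 - h + n * h) := by
  have hhz : (0 : ℤ) < h := by exact_mod_cast hh
  ext x
  simp only [Finset.mem_add, Finset.mem_image, mem_ULA, Finset.mem_Ico]
  constructor
  · rintro ⟨y, ⟨m, ⟨hm0, hmn⟩, rfl⟩, z, ⟨u, ⟨hu0, huh⟩, rfl⟩, rfl⟩
    constructor
    · nlinarith
    · nlinarith
  · rintro ⟨h1, h2⟩
    set y := x - (c + 1 - h) with hy
    have hy0 : 0 ≤ y := by omega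
    have hyn : y < n * h := by omega
    have hq0 : 0 ≤ y / h := Int.ediv_nonneg hy0 (le_of_lt hhz)
    have hqn : y / h < n := by
      rw [Int.ediv_lt_iff_lt_mul hhz]; exact hyn
    have hr0 : 0 ≤ y % h := Int.emod_nonneg y (ne_of_gt hhz)
    have hrh : y % h < h := Int.emod_lt_of_pos y hhz
    have hdm : (h : ℤ) * (y / h) + y % h = y := Int.mul_ediv_add_emod y h
    refine ⟨(h : ℤ) * (y / h), ⟨y / h, ⟨hq0, hqn⟩, rfl⟩,
      c - ((h : ℤ) - 1 - y % h), ⟨(h : ℤ) - 1 - y % h, ⟨by omega, by omega⟩, rfl⟩, ?_⟩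
    omega

lemma card_ULA (n : ℕ) : (ULA n).card = n := by
  simp [ULA]

/-- With `L = (N_t + 1)·N_r/2 − 1`, the sum co-array of the
dilated-ULA transmit array and the clustered receive array is nonredundant:
`|D_t + D_r| = N_t·N_r = |D_t|·|D_r|`. -/
theorem sum_coarray_nonredundant
    (Nt Nr : ℕ) (hNt : 1 ≤ Nt) (hNr : 2 ≤ Nr) (hNrEven : Even Nr)
    (L : ℕ) (hL : L = (Nt + 1) * Nr / 2 - 1) :
    ((ULA Nt).image (fun m => ((Nr : ℤ) / 2) * m) + clusteredArray Nr L).card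
      = Nt * Nr ∧
    Nt * Nr = ((ULA Nt).image (fun m => ((Nr : ℤ) / 2) * m)).card
      * (clusteredArray Nr L).card := by
  obtain ⟨h, rfl⟩ := hNrEven
  have hNr2 : h + h = 2 * h := by ring
  have hh : 0 < h := by omega
  have hdiv : (h + h) / 2 = h := by omega
  have hcast : ((h + h : ℕ) : ℤ) / 2 = (h : ℤ) := by
    push_cast; omega
  have hmul : (Nt + 1) * (h + h) = 2 * ((Nt + 1) * h) := by ring
  have hLval : L = (Nt + 1) * h - 1 := by
    rw [hL]; omega
  have h1le : 1 ≤ (Nt + 1) * h := by nlinarith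
  have hLz : (L : ℤ) = (Nt + 1) * h - 1 := by
    rw [hLval, Nat.cast_sub h1le]; push_cast; ring
  -- rewrite the coefficient
  have hcoef : ((ULA Nt).image (fun m => (((h + h : ℕ) : ℤ) / 2) * m))
      = (ULA Nt).image (fun m => (h : ℤ) * m) := by
    rw [hcast]
  rw [hcoef]
  have hclust : clusteredArray (h + h) L
      = (ULA h).image (fun u => ((h : ℤ) - 1) - u) ∪ (ULA h).image (fun u => (L : ℤ) - u) := by
    rw [clusteredArray, hdiv, ULA_reflect]
  -- the sumset
  have hsum : (ULA Nt).image (fun m => (h : ℤ) * m) + clusteredArray (h + h) L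
      = Finset.Ico (0 : ℤ) (2 * (Nt * h)) := by
    rw [hclust, Finset.add_union, dilated_add_block Nt h hh, dilated_add_block Nt h hh]
    have e1 : ((h : ℤ) - 1) + 1 - h = 0 := by ring
    have e2 : (L : ℤ) + 1 - h = Nt * h := by rw [hLz]; ring
    rw [e1, e2]
    have : (0 : ℤ) + Nt * h = Nt * h := by ring
    rw [this]
    rw [Finset.Ico_union_Ico_eq_Ico (by positivity)
      (le_add_of_nonneg_right (by positivity))]
    congr 1
    ring
  constructor
  · rw [hsum, Int.card_Ico]
    have : (2 * ((Nt : ℤ) * h) - 0) = ((Nt * (h + h) : ℕ) : ℤ) := by push_cast; ring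
    rw [this, Int.toNat_natCast]
  · -- cards
    have hinj1 : Function.Injective (fun m : ℤ => (h : ℤ) * m) :=
      fun a b hab => by
        have hhz : (h : ℤ) ≠ 0 := by exact_mod_cast hh.ne'
        exact mul_left_cancel₀ hhz hab
    have hinj2 : Function.Injective (fun u : ℤ => (L : ℤ) - u) :=
      fun a b hab => by simpa using hab
    have hc1 : ((ULA Nt).image (fun m => (h : ℤ) * m)).card = Nt := by
      rw [Finset.card_image_of_injective _ hinj1, card_ULA]
    have hc2 : (clusteredArray (h + h) L).card = h + h := by
      rw [clusteredArray, hdiv]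
      rw [Finset.card_union_of_disjoint, card_ULA,
        Finset.card_image_of_injective _ hinj2, card_ULA]
      · rw [Finset.disjoint_left]
        rintro x hx hx2
        rw [mem_ULA] at hx
        simp only [Finset.mem_image, mem_ULA] at hx2
        obtain ⟨u, ⟨hu0, huh⟩, rfl⟩ := hx2
        have hNtz : (1 : ℤ) ≤ Nt := by exact_mod_cast hNt
        have hge : (L : ℤ) - u ≥ (Nt : ℤ) * h := by rw [hLz]; linarith
        have : (Nt : ℤ) * h ≥ h := by nlinarith
        linarith
    rw [hc1, hc2]
end

section
/- Let N ≥ 1 be an integer, d : Fin N → ℤ an injective map with image D, and ω ∈ ℝ. Define a, ȧ ∈ ℂ^N (with the standard Hermitian inner product) by a_k = exp(i·d_k·ω) and ȧ_k = i·d_k·exp(i·d_k·ω) (the steering vector of the array D and its derivative with respect to ω). Then the squared norm of the component of ȧ orthogonal to a satisfies ‖ȧ − (⟨a, ȧ⟩/‖a‖²)·a‖² = ∑_{k} d_k² − (1/N)·(∑_{k} d_k)² = N·χ(D); that is, the Fisher-information quantity governing the single-target CRB equals the number of sensors times the spatial variance of the array. -/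
open scoped InnerProductSpace

/-- For the steering vector `a` of an `N`-sensor array with injective
sensor positions `d` and its derivative `ȧ` with respect to the angle `ω`, the squared
norm of the component of `ȧ` orthogonal to `a` equals
`∑ d_k² − (1/N)(∑ d_k)² = N·χ(D)`: the Fisher-information quantity governing the
single-target CRB is the number of sensors times the spatial variance of the array. -/
theorem steering_vector_fisher_information
    (N : ℕ) (hN : 1 ≤ N) (d : Fin N → ℤ) (hd : Function.Injective d) (ω : ℝ)
    (a adot : EuclideanSpace ℂ (Fin N))
    (ha : ∀ k, a k = Complex.exp (Complex.I * (d k : ℂ) * (ω : ℂ)))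
    (hadot : ∀ k, adot k = Complex.I * (d k : ℂ) * Complex.exp (Complex.I * (d k : ℂ) * (ω : ℂ))) :
    ‖adot - (⟪a, adot⟫_ℂ / ((‖a‖ : ℂ) ^ 2)) • a‖ ^ 2
        = (∑ k, ((d k : ℝ)) ^ 2) - (1 / (N : ℝ)) * (∑ k, ((d k : ℝ))) ^ 2
      ∧ (∑ k, ((d k : ℝ)) ^ 2) - (1 / (N : ℝ)) * (∑ k, ((d k : ℝ))) ^ 2
        = (N : ℝ) * spatialVar (Finset.univ.image d) := by
  have hN0 : (N : ℝ) ≠ 0 := Nat.cast_ne_zero.mpr (by omega)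
  set S : ℝ := ∑ k, ((d k : ℝ)) with hS
  -- each exponential has modulus 1
  have habs : ∀ k : Fin N, ‖Complex.exp (Complex.I * (d k : ℂ) * (ω : ℂ))‖ = 1 := by
    intro k
    rw [Complex.norm_exp]
    simp [Complex.mul_re, Complex.mul_im]
  -- ‖a‖² = N
  have hna : (‖a‖ : ℝ) ^ 2 = N := by
    rw [EuclideanSpace.norm_eq, Real.sq_sqrt (by positivity)]
    simp only [ha, habs]
    simp
  -- inner product
  have hinner : ⟪a, adot⟫_ℂ = Complex.I * (S : ℂ) := by
    simp only [PiLp.inner_apply, RCLike.inner_apply, ha, hadot]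
    have : ∀ k : Fin N, (starRingEnd ℂ) (Complex.exp (Complex.I * (d k : ℂ) * (ω : ℂ))) *
        (Complex.I * (d k : ℂ) * Complex.exp (Complex.I * (d k : ℂ) * (ω : ℂ)))
        = Complex.I * (d k : ℂ) := by
      intro k
      have h1 : (starRingEnd ℂ) (Complex.exp (Complex.I * (d k : ℂ) * (ω : ℂ))) *
          Complex.exp (Complex.I * (d k : ℂ) * (ω : ℂ)) = 1 := by
        rw [Complex.conj_mul']
        norm_cast
        rw [habs k]; norm_num
      calc _ = Complex.I * (d k : ℂ) * ((starRingEnd ℂ) (Complex.exp (Complex.I * (d k : ℂ) * (ω : ℂ))) *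
            Complex.exp (Complex.I * (d k : ℂ) * (ω : ℂ))) := by ring
        _ = Complex.I * (d k : ℂ) := by rw [h1]; ring
    rw [Finset.sum_congr rfl fun k _ => (mul_comm _ _).trans (this k), ← Finset.mul_sum]
    rw [hS]
    norm_cast
  -- the coefficient
  have hcoef : ⟪a, adot⟫_ℂ / ((‖a‖ : ℂ) ^ 2) = Complex.I * ((S / N : ℝ) : ℂ) := by
    rw [hinner]
    have : ((‖a‖ : ℂ) ^ 2) = (N : ℂ) := by
      exact_mod_cast hna
    rw [this]
    push_cast
    try rw [mul_div_assoc]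
  -- key: the squared norm of the residual
  have hkey : ‖adot - (⟪a, adot⟫_ℂ / ((‖a‖ : ℂ) ^ 2)) • a‖ ^ 2
      = ∑ k, ((d k : ℝ) - S / N) ^ 2 := by
    rw [EuclideanSpace.norm_eq, Real.sq_sqrt (by positivity)]
    refine Finset.sum_congr rfl fun k _ => ?_
    have hk : (adot - (⟪a, adot⟫_ℂ / ((‖a‖ : ℂ) ^ 2)) • a) k
        = (Complex.I * ((d k : ℝ) - S / N : ℝ)) * Complex.exp (Complex.I * (d k : ℂ) * (ω : ℂ)) := by
      simp only [PiLp.sub_apply, PiLp.smul_apply, smul_eq_mul, ha, hadot, hcoef]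
      push_cast
      ring
    rw [hk]
    rw [norm_mul, habs k, mul_one, norm_mul, Complex.norm_I, one_mul,
      Complex.norm_real, Real.norm_eq_abs, sq_abs]
  constructor
  · rw [hkey]
    have : ∀ k : Fin N, ((d k : ℝ) - S / N) ^ 2
        = (d k : ℝ) ^ 2 - 2 * (S / N) * (d k : ℝ) + (S / N) ^ 2 := fun k => by ring
    rw [Finset.sum_congr rfl fun k _ => this k]
    rw [Finset.sum_add_distrib, Finset.sum_sub_distrib, ← Finset.mul_sum, ← hS,
      Finset.sum_const, Finset.card_univ, Fintype.card_fin, nsmul_eq_mul]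
    field_simp
    ring
  · -- variance part
    have hcard : (Finset.univ.image d).card = N := by
      rw [Finset.card_image_of_injective _ hd, Finset.card_univ, Fintype.card_fin]
    have hmean : spatialMean (Finset.univ.image d) = S / N := by
      unfold spatialMean
      rw [hcard, Finset.sum_image (fun x _ y _ h => hd h)]
    have hvar : spatialVar (Finset.univ.image d) = (∑ k, ((d k : ℝ) - S / N) ^ 2) / N := by
      unfold spatialVar
      rw [hcard, hmean, Finset.sum_image (fun x _ y _ h => hd h)]
    rw [hvar, mul_div_cancel₀ _ hN0]
    have : ∀ k : Fin N, ((d k : ℝ) - S / N) ^ 2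
        = (d k : ℝ) ^ 2 - 2 * (S / N) * (d k : ℝ) + (S / N) ^ 2 := fun k => by ring
    rw [Finset.sum_congr rfl fun k _ => this k]
    rw [Finset.sum_add_distrib, Finset.sum_sub_distrib, ← Finset.mul_sum, ← hS,
      Finset.sum_const, Finset.card_univ, Fintype.card_fin, nsmul_eq_mul]
    field_simp
    ring
end
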